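/- Define u(t) = 8t^3/(3-t^2), w(t) = (2 - u(t)^2 - t^2)/(1 - t^2 + 8t - 8t\,u(t)), and F_2(t) = 4 w(t) t (1 - u(t)/2) - 5/8. Then F_2(t) > 0 for all t \in (0.36, 0.609). -/

import Mathlib

theorem stmt19 (t : ℝ) (ht : t ∈ Set.Ioo (0.36 : ℝ) 0.609) :
    4 * ((2 - (8*t^3/(3 - t^2))^2 - t^2) / (1 - t^2 + 8*t - 8*t*(8*t^3/(3 - t^2))))
      * t * (1 - (8*t^3/(3 - t^2))/2) - 5/8 > 0 := by
  obtain ⟨h1, h2⟩ := ht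
  norm_num at h1 h2
  have hp : 0 < t - 9/25 := by linarith
  have hq : 0 < 609/1000 - t := by linarith
  have hpq := mul_pos hp hq
  have ha : (0:ℝ) < 3 - t^2 := by nlinarith
  have hB : (0:ℝ) < 3 + 24*t - 4*t^2 - 8*t^3 - 63*t^4 := by
    nlinarith [hpq, mul_pos hpq hpq, mul_pos hpq hp, mul_pos hpq hq, sq_nonneg t,
      mul_pos hp hp]
  have key : 4 * ((2 - (8*t^3/(3 - t^2))^2 - t^2) / (1 - t^2 + 8*t - 8*t*(8*t^3/(3 - t^2))))
      * t * (1 - (8*t^3/(3 - t^2))/2) - 5/8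
      = (-135 + 648*t + 270*t^2 - 1512*t^3 + 396*t^4 + 1080*t^5 + 818*t^6 - 6456*t^7
          - 709*t^8 + 2080*t^9 + 8320*t^10)
        / (8*(3 - t^2)^2*(3 + 24*t - 4*t^2 - 8*t^3 - 63*t^4)) := by
    have hd : 1 - t^2 + 8*t - 8*t*(8*t^3/(3 - t^2))
        = (3 + 24*t - 4*t^2 - 8*t^3 - 63*t^4)/(3 - t^2) := by
      field_simp; ring
    rw [hd]
    field_simp [show (3 + t*24 - 4*t^2 - 8*t^3 - t^4*63 : ℝ) ≠ 0 by nlinarith]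
    ring
  rw [gt_iff_lt, key]
  apply div_pos
  · nlinarith [hpq, mul_pos hpq hpq, mul_pos (mul_pos hpq hpq) hpq,
      mul_pos (mul_pos (mul_pos hpq hpq) hpq) hpq,
      mul_pos (mul_pos (mul_pos (mul_pos hpq hpq) hpq) hpq) hpq,
      mul_pos hpq hp, mul_pos hpq hq, sq_nonneg t, mul_pos hp hp, mul_pos hq hq,
      mul_pos (mul_pos hpq hpq) hp, mul_pos (mul_pos hpq hpq) hq]
  · positivity
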